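/- A permutation of a finite set is determined up to conjugacy by the function n ↦ (number of fixed points of its n-th power); concretely, two permutations σ, τ of finite sets of equal cardinality have the same cycle type if and only if for every n ≥ 1, σⁿ and τⁿ have the same number of fixed points. -/

import Mathlib

open Equiv Equiv.Perm Finset

private lemma fix_count_key {α : Type} [Fintype α] [DecidableEq α]
    (σ : Equiv.Perm α) (n : ℕ) (hn : 1 ≤ n) :
    (Finset.univ.filter fun x => (σ ^ n) x = x).card + σ.cycleType.sum
      = (σ.cycleType.filter (· ∣ n)).sum + Fintype.card α := by
  induction σ using Equiv.Perm.cycle_induction_on with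
  | base_one => simp [Equiv.Perm.cycleType_one, Finset.card_univ]
  | base_cycles σ hσ =>
    rw [hσ.cycleType]
    by_cases hd : σ.support.card ∣ n
    · have h1 : σ ^ n = 1 := by
        rw [← hσ.orderOf] at hd
        exact orderOf_dvd_iff_pow_eq_one.mp hd
      have : (Finset.univ.filter fun x => (σ ^ n) x = x) = Finset.univ := by
        rw [h1]; simp
      rw [this]
      simp [Multiset.filter_singleton, hd, Finset.card_univ]
      omega
    · have hne : σ ^ n ≠ 1 := by
        intro h1
        exact hd (by rw [← hσ.orderOf]; exact orderOf_dvd_iff_pow_eq_one.mpr h1)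
      have : (Finset.univ.filter fun x => (σ ^ n) x = x) = σ.supportᶜ := by
        ext x
        simp only [Finset.mem_filter, Finset.mem_univ, true_and, Finset.mem_compl,
          Equiv.Perm.mem_support, not_not]
        constructor
        · intro hx
          by_contra hxx
          exact hne ((hσ.pow_eq_one_iff' hxx).mpr hx)
        · intro hx
          exact Equiv.Perm.pow_apply_eq_self_of_apply_eq_self hx n
      rw [this]
      rw [Finset.card_compl]
      have := σ.support.card_le_univ
      simp [Multiset.filter_singleton, hd]
      omega
  | induction_disjoint σ π hdisj hc hσ hπ =>
    -- fixed points of (σπ)^n = fix σ^n ∩ fix π^n, and their union is univ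
    set s := Finset.univ.filter fun x => (σ ^ n) x = x with hs
    set t := Finset.univ.filter fun x => (π ^ n) x = x with ht
    have hmem : ∀ x, ((σ * π) ^ n) x = x ↔ ((σ ^ n) x = x ∧ (π ^ n) x = x) := by
      intro x
      rw [hdisj.commute.mul_pow]
      constructor
      · intro hx
        have hπx : (π ^ n) x = x := by
          by_contra hne
          have hx1 : x ∈ (π ^ n).support := Equiv.Perm.mem_support.mpr hne
          have hy1 : (π ^ n) x ∈ (π ^ n).support := Equiv.Perm.apply_mem_support.mpr hx1
          have hy2 : (π ^ n) x ∈ π.support := Equiv.Perm.support_pow_le π n hy1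
          have hσy : σ ((π ^ n) x) = (π ^ n) x := by
            rcases hdisj ((π ^ n) x) with h | h
            · exact h
            · exact absurd h (Equiv.Perm.mem_support.mp hy2)
          have : (σ ^ n) ((π ^ n) x) = (π ^ n) x :=
            Equiv.Perm.pow_apply_eq_self_of_apply_eq_self hσy n
          rw [Equiv.Perm.mul_apply, this] at hx
          exact hne hx
        rw [Equiv.Perm.mul_apply, hπx] at hx
        exact ⟨hx, hπx⟩
      · rintro ⟨h1, h2⟩
        rw [Equiv.Perm.mul_apply, h2, h1]
    have hinter : (Finset.univ.filter fun x => ((σ * π) ^ n) x = x) = s ∩ t := by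
      ext x
      simp only [hs, ht, Finset.mem_filter, Finset.mem_inter, Finset.mem_univ, true_and, hmem x]
    have hunion : s ∪ t = Finset.univ := by
      ext x
      simp only [hs, ht, Finset.mem_union, Finset.mem_filter, Finset.mem_univ, true_and,
        iff_true]
      rcases hdisj x with h | h
      · exact Or.inl (Equiv.Perm.pow_apply_eq_self_of_apply_eq_self h n)
      · exact Or.inr (Equiv.Perm.pow_apply_eq_self_of_apply_eq_self h n)
    have hcards : (s ∪ t).card + (s ∩ t).card = s.card + t.card :=
      Finset.card_union_add_card_inter s t
    rw [hunion, Finset.card_univ] at hcards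
    have hct : (σ * π).cycleType = σ.cycleType + π.cycleType := Equiv.Perm.Disjoint.cycleType_mul hdisj
    rw [hinter, hct, Multiset.filter_add, Multiset.sum_add, Multiset.sum_add]
    omega

/-- Two permutations `σ, τ` of finite sets of equal cardinality have the
same cycle type if and only if for every `n ≥ 1`, `σⁿ` and `τⁿ` have the same number of
fixed points. -/
theorem cycleType_eq_iff_fixed_point_counts (X Y : Type)
    [Fintype X] [DecidableEq X] [Fintype Y] [DecidableEq Y]
    (hcard : Fintype.card X = Fintype.card Y)
    (σ : Equiv.Perm X) (τ : Equiv.Perm Y) :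
    σ.cycleType = τ.cycleType ↔
      ∀ n : ℕ, 1 ≤ n →
        Nat.card {x : X // (σ ^ n) x = x} = Nat.card {y : Y // (τ ^ n) y = y} := by
  have hNc : ∀ n : ℕ, Nat.card {x : X // (σ ^ n) x = x}
      = (Finset.univ.filter fun x => (σ ^ n) x = x).card := by
    intro n
    rw [Nat.card_eq_fintype_card, Fintype.card_subtype]
  have hNc' : ∀ n : ℕ, Nat.card {y : Y // (τ ^ n) y = y}
      = (Finset.univ.filter fun y => (τ ^ n) y = y).card := by
    intro n
    rw [Nat.card_eq_fintype_card, Fintype.card_subtype]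
  constructor
  · intro h n hn
    have A := fix_count_key σ n hn
    have B := fix_count_key τ n hn
    rw [h] at A
    rw [hNc, hNc']
    omega
  · intro h
    have key : ∀ n, 1 ≤ n → (σ.cycleType.filter (· ∣ n)).sum + τ.cycleType.sum
        = (τ.cycleType.filter (· ∣ n)).sum + σ.cycleType.sum := by
      intro n hn
      have hfix := h n hn
      rw [hNc, hNc'] at hfix
      have A := fix_count_key σ n hn
      have B := fix_count_key τ n hn
      omega
    have h1 : σ.cycleType.sum = τ.cycleType.sum := by
      have hk := key 1 le_rfl
      have e1 : σ.cycleType.filter (· ∣ 1) = 0 := by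
        rw [Multiset.filter_eq_nil]
        intro a ha hd
        have h2 := Equiv.Perm.two_le_of_mem_cycleType ha
        have := Nat.le_of_dvd one_pos hd
        omega
      have e2 : τ.cycleType.filter (· ∣ 1) = 0 := by
        rw [Multiset.filter_eq_nil]
        intro a ha hd
        have h2 := Equiv.Perm.two_le_of_mem_cycleType ha
        have := Nat.le_of_dvd one_pos hd
        omega
      rw [e1, e2] at hk
      omega
    have hfil : ∀ n, 1 ≤ n → (σ.cycleType.filter (· ∣ n)).sum
        = (τ.cycleType.filter (· ∣ n)).sum := by
      intro n hn
      have := key n hn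
      omega
    have hcount : ∀ d, σ.cycleType.count d = τ.cycleType.count d := by
      intro d
      induction d using Nat.strong_induction_on with
      | _ d IH =>
        rcases Nat.eq_zero_or_pos d with h0 | hd
        · subst h0
          rw [Multiset.count_eq_zero_of_notMem, Multiset.count_eq_zero_of_notMem]
          · intro hm; have := Equiv.Perm.two_le_of_mem_cycleType hm; omega
          · intro hm; have := Equiv.Perm.two_le_of_mem_cycleType hm; omega
        · have split : ∀ m : Multiset ℕ, m.filter (· ∣ d)
              = m.filter (fun e => e ∣ d ∧ e ≠ d) + m.filter (· = d) := by
            intro m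
            rw [Multiset.ext]
            intro e
            rw [Multiset.count_add, Multiset.count_filter, Multiset.count_filter,
              Multiset.count_filter]
            by_cases hed : e = d
            · subst hed
              simp
            · by_cases hdvd : e ∣ d
              · simp [hdvd, hed]
              · simp [hdvd, hed, fun h : e ∣ d ∧ e ≠ d => hdvd h.1]
          have hproper : σ.cycleType.filter (fun e => e ∣ d ∧ e ≠ d)
              = τ.cycleType.filter (fun e => e ∣ d ∧ e ≠ d) := by
            rw [Multiset.ext]
            intro e
            rw [Multiset.count_filter, Multiset.count_filter]
            split_ifs with he
            · exact IH e (lt_of_le_of_ne (Nat.le_of_dvd hd he.1) he.2)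
            · rfl
          have heq : ∀ m : Multiset ℕ, (m.filter (· = d)).sum = m.count d * d := by
            intro m
            rw [Multiset.filter_eq', Multiset.sum_replicate, smul_eq_mul]
          have hk := hfil d hd
          rw [split, split, Multiset.sum_add, Multiset.sum_add, hproper, heq, heq] at hk
          have : σ.cycleType.count d * d = τ.cycleType.count d * d := by omega
          exact Nat.eq_of_mul_eq_mul_right hd this
    exact Multiset.ext.mpr hcount
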